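/- Let K be a finite field of characteristic 2, F a subfield of K, V a vector space over K, β : V×V → K a symmetric bilinear form which is not alternating, and L : K → F a nonzero F-linear map. Then Lβ = L∘β is a symmetric F-bilinear form on V (regarded as an F-vector space) which is not alternating. -/
import Mathlib


/-- Let `K` be a finite field of characteristic `2`, `F` a subfield of
`K`, `V` a vector space over `K`, `β : V × V → K` a symmetric bilinear form which is not
alternating, and `L : K → F` a nonzero `F`-linear map.  Then `Lβ = L ∘ β` is a symmetric
`F`-bilinear form on `V` (regarded as an `F`-vector space) which is not alternating. -/
theorem stmt_3 {K : Type*} [Field K] [Fintype K] (hchar : ringChar K = 2)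
    (F : Subfield K) {V : Type*} [AddCommGroup V] [Module K V]
    (β : V → V → K)
    (hβadd₁ : ∀ u v w : V, β (u + v) w = β u w + β v w)
    (hβadd₂ : ∀ u v w : V, β u (v + w) = β u v + β u w)
    (hβsmul₁ : ∀ (a : K) (v w : V), β (a • v) w = a * β v w)
    (hβsmul₂ : ∀ (a : K) (v w : V), β v (a • w) = a * β v w)
    (hβsym : ∀ v w : V, β v w = β w v)
    (hβnalt : ¬ (∀ v : V, β v v = 0))
    (L : K → F)
    (hLadd : ∀ x y : K, L (x + y) = L x + L y)
    (hLsmul : ∀ (c : F) (x : K), L ((c : K) * x) = c * L x)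
    (hL0 : ∃ x : K, L x ≠ 0) :
    (∀ u v w : V, L (β (u + v) w) = L (β u w) + L (β v w)) ∧
    (∀ u v w : V, L (β u (v + w)) = L (β u v) + L (β u w)) ∧
    (∀ (c : F) (v w : V), L (β ((c : K) • v) w) = c * L (β v w)) ∧
    (∀ (c : F) (v w : V), L (β v ((c : K) • w)) = c * L (β v w)) ∧
    (∀ v w : V, L (β v w) = L (β w v)) ∧
    ¬ (∀ v : V, L (β v v) = 0) := by
  haveI : CharP K 2 := ringChar.eq_iff.mp hchar
  have two : (2 : K) = 0 := CharP.cast_eq_zero K 2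
  refine ⟨fun u v w => by rw [hβadd₁, hLadd],
    fun u v w => by rw [hβadd₂, hLadd],
    fun c v w => by rw [hβsmul₁, hLsmul],
    fun c v w => by rw [hβsmul₂, hLsmul],
    fun v w => by rw [hβsym v w], ?_⟩
  intro h
  push_neg at hβnalt
  obtain ⟨v₀, hv₀⟩ := hβnalt
  obtain ⟨x, hx⟩ := hL0
  have hsq : Function.Surjective (fun a : K => a * a) := by
    have hinj : Function.Injective (fun a : K => a * a) := by
      intro a b hab
      simp only at hab
      have h0 : (a - b) * (a - b) = 0 := by
        linear_combination hab + (b * b - a * b) * two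
      exact sub_eq_zero.mp (mul_self_eq_zero.mp h0)
    exact Finite.injective_iff_surjective.mp hinj
  obtain ⟨a, ha⟩ := hsq (x * (β v₀ v₀)⁻¹)
  simp only at ha
  have key : β (a • v₀) (a • v₀) = x := by
    rw [hβsmul₁, hβsmul₂, ← mul_assoc, ha, mul_assoc,
      inv_mul_cancel₀ hv₀, mul_one]
  exact hx (by rw [← key]; exact h (a • v₀))
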